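/- Let ℋ = ℂ²⊗ℂ²⊗ℂ²⊗ℂ² with the action of Ĝ = SL(2,ℂ)⁴, and let u₁ = e₀₀₀₀+e₁₁₁₁, u₂ = e₀₁₁₀+e₁₀₀₁, u₃ = e₀₁₀₁+e₁₀₁₀. Let λ₁, λ₂ ∈ ℂ with λ₁ ≠ 0, λ₂ ≠ 0 and λ₁ ≠ −λ₂. Then the stabiliser in Ĝ of s = λ₁(u₁−u₂) + λ₂(u₁−u₃) equals {(ε₁A^#, ε₂A^#, ε₃A, A) : A ∈ SL(2,ℂ), ε₁, ε₂, ε₃ ∈ {1,−1}, ε₁ε₂ε₃ = 1}, where for A = [[a,b],[c,d]] one sets A^# = [[d,c],[b,a]]. -/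
import Mathlib


/-- The Hilbert space of four qubits, in coordinates with respect to the basis
`e_{i₁i₂i₃i₄} = e_{i₁} ⊗ e_{i₂} ⊗ e_{i₃} ⊗ e_{i₄}` of `ℂ² ⊗ ℂ² ⊗ ℂ² ⊗ ℂ²`. -/
abbrev H4 : Type := Fin 2 → Fin 2 → Fin 2 → Fin 2 → ℂ

abbrev SL2 := Matrix.SpecialLinearGroup (Fin 2) ℂ

/-- The group `Ĝ = SL(2,ℂ)⁴`. -/
abbrev G4 := SL2 × SL2 × SL2 × SL2

/-- The action of `SL(2,ℂ)⁴` on `ℂ² ⊗ ℂ² ⊗ ℂ² ⊗ ℂ²`, given in coordinates: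
it is the linear extension of `(A,B,C,D)·(v₁⊗v₂⊗v₃⊗v₄) = Av₁⊗Bv₂⊗Cv₃⊗Dv₄`. -/
noncomputable def act (g : G4) (x : H4) : H4 := fun i1 i2 i3 i4 =>
  ∑ j1 : Fin 2, ∑ j2 : Fin 2, ∑ j3 : Fin 2, ∑ j4 : Fin 2,
    g.1 i1 j1 * g.2.1 i2 j2 * g.2.2.1 i3 j3 * g.2.2.2 i4 j4 * x j1 j2 j3 j4

/-- The basis vector `e_{i₁i₂i₃i₄}`. -/
def e (i1 i2 i3 i4 : Fin 2) : H4 := fun j1 j2 j3 j4 =>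
  if j1 = i1 ∧ j2 = i2 ∧ j3 = i3 ∧ j4 = i4 then 1 else 0

noncomputable def u1 : H4 := e 0 0 0 0 + e 1 1 1 1
noncomputable def u2 : H4 := e 0 1 1 0 + e 1 0 0 1
noncomputable def u3 : H4 := e 0 1 0 1 + e 1 0 1 0

/-- For `A = [[a,b],[c,d]]`, `A^# = [[d,c],[b,a]]`. -/
noncomputable def sharp (A : SL2) : SL2 :=
  ⟨!![A.1 1 1, A.1 1 0; A.1 0 1, A.1 0 0], by
    have h := A.2
    rw [Matrix.det_fin_two] at h
    rw [Matrix.det_fin_two_of]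
    linear_combination h⟩

lemma corner_aux (α β : ℂ) (hα : α ≠ 0) (hβ : β ≠ 0) (hαβ : α + β ≠ 0)
    (P00 P01 P10 P11 Q00 Q01 Q10 Q11 R00 R01 R10 R11 S00 S01 S10 S11 : ℂ)
    (e1 : α*(P00*Q00) + β*(S00*R00) = α + β)
    (e2 : α*(P00*Q01) + β*(S01*R00) = 0)
    (e3 : α*(P01*Q00) + β*(S00*R01) = 0)
    (e4 : α*(P01*Q01) + β*(S01*R01) = 0)
    (e5 : α*(P01*Q10) + β*(S00*R11) = -β)
    (e6 : α*(P01*Q11) + β*(S01*R11) = 0)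
    (e7 : α*(P10*Q01) + β*(S11*R00) = -β)
    (e8 : α*(P11*Q01) + β*(S11*R01) = 0)
    (e9 : α*(P00*Q11) + β*(S01*R10) = -α)
    (e10 : α*(P11*Q00) + β*(S10*R01) = -α)
    (dP : P00*P11 - P01*P10 = -1) (dQ : Q00*Q11 - Q01*Q10 = -1)
    (dR : R00*R11 - R01*R10 = -1) (dS : S00*S11 - S01*S10 = -1) :
    P01 = 0 ∧ Q01 = 0 ∧ R01 = 0 ∧ S01 = 0 := by
  have C1 : α^2*P01^2 = β^2*(R01*S01) := by
    linear_combination (α*P01*Q10)*e4 - (β*S01*R01)*e5 - (α*P01*Q11)*e3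
      + (β*S00*R01)*e6 + (α^2*P01^2)*dQ
  have C2 : α^2*Q01^2 = β^2*(R01*S01) := by
    linear_combination (α*Q01*P10)*e4 - (β*R01*S01)*e7 - (α*Q01*P11)*e2
      + (β*R00*S01)*e8 + (α^2*Q01^2)*dP
  have C4 : β^2*S01^2 = α^2*(P01*Q01) := by
    linear_combination (β*S01*R10)*e4 - (α*P01*Q01)*e9 - (β*S01*R11)*e2
      + (α*P00*Q01)*e6 + (β^2*S01^2)*dR
  have C5 : β^2*R01^2 = α^2*(P01*Q01) := by
    linear_combination (β*R01*S10)*e4 - (α*Q01*P01)*e10 - (β*R01*S11)*e3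
      + (α*Q00*P01)*e8 + (β^2*R01^2)*dS
  have hp : P01 = 0 := by
    by_contra hp
    have P1 : α*(P01*(α*P01 + β*Q01)) = 0 := by linear_combination C1 + β*e4
    have hpq : α*P01 + β*Q01 = 0 := by
      rcases mul_eq_zero.mp P1 with h | h
      · exact absurd h hα
      · rcases mul_eq_zero.mp h with h' | h'
        · exact absurd h' hp
        · exact h'
    have Q1 : α*(Q01*(α*Q01 + β*P01)) = 0 := by linear_combination C2 + β*e4
    have hq : Q01 ≠ 0 := by
      intro h0
      apply hp
      have h1 : α*P01 = 0 := by linear_combination hpq - β*h0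
      rcases mul_eq_zero.mp h1 with h2 | h2
      · exact absurd h2 hα
      · exact h2
    have hqp : α*Q01 + β*P01 = 0 := by
      rcases mul_eq_zero.mp Q1 with h | h
      · exact absurd h hα
      · rcases mul_eq_zero.mp h with h' | h'
        · exact absurd h' hq
        · exact h'
    have hab : α = β := by
      have h2 : ((α - β)*(α+β))*P01 = 0 := by linear_combination α*hpq - β*hqp
      rcases mul_eq_zero.mp h2 with h3 | h3
      · rcases mul_eq_zero.mp h3 with h4 | h4
        · exact sub_eq_zero.mp h4
        · exact absurd h4 hαβ
      · exact absurd h3 hp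
    subst hab
    have hqneg : Q01 = -P01 := by
      have h3 : α*(Q01 + P01) = 0 := by linear_combination hpq
      rcases mul_eq_zero.mp h3 with h4 | h4
      · exact absurd h4 hα
      · linear_combination h4
    have hrs : R01*S01 = P01^2 := by
      have h3 : (α*α)*(R01*S01 - P01^2) = 0 := by linear_combination -C1
      rcases mul_eq_zero.mp h3 with h4 | h4
      · rcases mul_eq_zero.mp h4 with h | h <;> exact absurd h hα
      · linear_combination h4
    have h5 : S01*R00 = P00*P01 := by
      apply mul_left_cancel₀ hα
      linear_combination e2 - α*P00*hqneg
    have h6 : S00*R01 = -(P01*Q00) := by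
      apply mul_left_cancel₀ hα
      linear_combination e3
    have h7 : P00*Q00 + S00*R00 = 2 := by
      apply mul_left_cancel₀ hα
      linear_combination e1
    have h8 : P01^2*(P00*Q00 + S00*R00) = 0 := by
      linear_combination (S00*R01)*h5 + (P00*P01)*h6 - (R00*S00)*hrs
    have h9 : P01^2 = 0 := by linear_combination (h8 - P01^2*h7)/2
    exact hp (pow_eq_zero_iff (two_ne_zero) |>.mp h9)
  have hr : R01 = 0 := by
    have h2 : (β*R01)^2 = 0 := by linear_combination C5 + α^2*Q01*hp
    have h3 : β*R01 = 0 := pow_eq_zero_iff two_ne_zero |>.mp h2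
    rcases mul_eq_zero.mp h3 with h | h
    exacts [absurd h hβ, h]
  have hs : S01 = 0 := by
    have h2 : (β*S01)^2 = 0 := by linear_combination C4 + α^2*Q01*hp
    have h3 : β*S01 = 0 := pow_eq_zero_iff two_ne_zero |>.mp h2
    rcases mul_eq_zero.mp h3 with h | h
    exacts [absurd h hβ, h]
  have hq : Q01 = 0 := by
    have h2 : (α*Q01)^2 = 0 := by linear_combination C2 + β^2*S01*hr
    have h3 : α*Q01 = 0 := pow_eq_zero_iff two_ne_zero |>.mp h2
    rcases mul_eq_zero.mp h3 with h | h
    exacts [absurd h hα, h]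
  exact ⟨hp, hq, hr, hs⟩


lemma diag_aux (α β : ℂ) (hα : α ≠ 0) (hβ : β ≠ 0) (hαβ : α + β ≠ 0)
    (P00 P01 P10 P11 Q00 Q01 Q10 Q11 R00 R01 R10 R11 S00 S01 S10 S11 : ℂ)
    (zP01 : P01 = 0) (zP10 : P10 = 0) (zQ01 : Q01 = 0) (zQ10 : Q10 = 0)
    (zR01 : R01 = 0) (zR10 : R10 = 0) (zS01 : S01 = 0) (zS10 : S10 = 0)
    (E1 : α*(P00*Q00) + β*(S00*R00) = α + β)
    (E5 : α*(P11*Q11) + β*(S11*R11) = α + β)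
    (E9 : α*(P00*Q11) + β*(S01*R10) = -α)
    (E10 : α*(P11*Q00) + β*(S10*R01) = -α)
    (E11 : α*(P01*Q10) + β*(S00*R11) = -β)
    (E12 : α*(P10*Q01) + β*(S11*R00) = -β)
    (dP : P00*P11 - P01*P10 = -1) (dQ : Q00*Q11 - Q01*Q10 = -1)
    (dR : R00*R11 - R01*R10 = -1) (dS : S00*S11 - S01*S10 = -1) :
    ∃ ε ε' : ℂ, (ε = 1 ∨ ε = -1) ∧ (ε' = 1 ∨ ε' = -1) ∧
      P00 = ε ∧ P11 = -ε ∧ Q00 = ε ∧ Q11 = -ε ∧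
      R00 = ε' ∧ R11 = -ε' ∧ S00 = ε' ∧ S11 = -ε' := by
  have hPQ11 : P00*Q11 = -1 := by
    apply mul_left_cancel₀ hα; linear_combination E9 - β*R10*zS01
  have hP11Q : P11*Q00 = -1 := by
    apply mul_left_cancel₀ hα; linear_combination E10 - β*R01*zS10
  have hSR11 : S00*R11 = -1 := by
    apply mul_left_cancel₀ hβ; linear_combination E11 - α*Q10*zP01
  have hS11R : S11*R00 = -1 := by
    apply mul_left_cancel₀ hβ; linear_combination E12 - α*Q01*zP10
  have dP' : P00*P11 = -1 := by linear_combination dP + P10*zP01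
  have dS' : S00*S11 = -1 := by linear_combination dS + S10*zS01
  have hP00ne : P00 ≠ 0 := fun h0 => one_ne_zero (α := ℂ) (by linear_combination dP' - P11*h0)
  have hP11ne : P11 ≠ 0 := fun h0 => one_ne_zero (α := ℂ) (by linear_combination dP' - P00*h0)
  have hS00ne : S00 ≠ 0 := fun h0 => one_ne_zero (α := ℂ) (by linear_combination dS' - S11*h0)
  have hS11ne : S11 ≠ 0 := fun h0 => one_ne_zero (α := ℂ) (by linear_combination dS' - S00*h0)
  have hQ11 : Q11 = P11 := by
    apply mul_left_cancel₀ hP00ne; linear_combination hPQ11 - dP'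
  have hQ00 : Q00 = P00 := by
    apply mul_left_cancel₀ hP11ne; linear_combination hP11Q - dP'
  have hR11 : R11 = S11 := by
    apply mul_left_cancel₀ hS00ne; linear_combination hSR11 - dS'
  have hR00 : R00 = S00 := by
    apply mul_left_cancel₀ hS11ne; linear_combination hS11R - dS'
  have E1'' : α*P00^2 + β*S00^2 = α + β := by
    linear_combination E1 - α*P00*hQ00 - β*S00*hR00
  have E5'' : α*P11^2 + β*S11^2 = α + β := by
    linear_combination E5 - α*P11*hQ11 - β*S11*hR11
  have E2' : α*S00^2 + β*P00^2 = (α+β)*(P00^2*S00^2) := by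
    linear_combination (P00^2*S00^2)*E5'' - α*S00^2*(P00*P11-1)*dP' - β*P00^2*(S00*S11-1)*dS'
  have hu : (α*(α+β))*((P00^2-1)^2) = (α*(α+β))*0 := by
    linear_combination ((α+β)*P00^2 - α)*E1'' + β*E2'
  have hP2 : P00^2 - 1 = 0 :=
    pow_eq_zero_iff two_ne_zero |>.mp (by simpa using mul_left_cancel₀ (mul_ne_zero hα hαβ) hu)
  have hP00sq : P00^2 = 1 := by linear_combination hP2
  have hS00sq : S00^2 = 1 := by
    apply mul_left_cancel₀ hβ; linear_combination E1'' - α*hP00sq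
  have hP11v : P11 = -P00 := by
    apply mul_left_cancel₀ hP00ne; linear_combination dP' + hP00sq
  have hS11v : S11 = -S00 := by
    apply mul_left_cancel₀ hS00ne; linear_combination dS' + hS00sq
  have hεor : P00 = 1 ∨ P00 = -1 := by
    have h : (P00 - 1)*(P00 + 1) = 0 := by linear_combination hP00sq
    rcases mul_eq_zero.mp h with h | h
    · exact Or.inl (sub_eq_zero.mp h)
    · exact Or.inr (eq_neg_of_add_eq_zero_left h)
  have hε'or : S00 = 1 ∨ S00 = -1 := by
    have h : (S00 - 1)*(S00 + 1) = 0 := by linear_combination hS00sq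
    rcases mul_eq_zero.mp h with h | h
    · exact Or.inl (sub_eq_zero.mp h)
    · exact Or.inr (eq_neg_of_add_eq_zero_left h)
  exact ⟨P00, S00, hεor, hε'or, rfl, hP11v, hQ00, by rw [hQ11, hP11v],
    hR00, by rw [hR11, hS11v], rfl, hS11v⟩

lemma master (α β : ℂ) (hα : α ≠ 0) (hβ : β ≠ 0) (hαβ : α + β ≠ 0)
    (a0 a1 a2 a3 b0 b1 b2 b3 c0 c1 c2 c3 d0 d1 d2 d3 : ℂ)
    (dA : a0*a3 - a1*a2 = 1) (dB : b0*b3 - b1*b2 = 1)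
    (dC : c0*c3 - c1*c2 = 1) (dD : d0*d3 - d1*d2 = 1)
    (E0000 : α*((a0*d0 - a1*d1)*(b0*c0 - b1*c1)) + β*((a0*c0 - a1*c1)*(b0*d0 - b1*d1)) = α + β)
    (E0001 : α*((a0*d2 - a1*d3)*(b0*c0 - b1*c1)) + β*((a0*c0 - a1*c1)*(b0*d2 - b1*d3)) = 0)
    (E0010 : α*((a0*d0 - a1*d1)*(b0*c2 - b1*c3)) + β*((a0*c2 - a1*c3)*(b0*d0 - b1*d1)) = 0)
    (E0011 : α*((a0*d2 - a1*d3)*(b0*c2 - b1*c3)) + β*((a0*c2 - a1*c3)*(b0*d2 - b1*d3)) = 0)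
    (E0100 : α*((a0*d0 - a1*d1)*(b2*c0 - b3*c1)) + β*((a0*c0 - a1*c1)*(b2*d0 - b3*d1)) = 0)
    (E0101 : α*((a0*d2 - a1*d3)*(b2*c0 - b3*c1)) + β*((a0*c0 - a1*c1)*(b2*d2 - b3*d3)) = -β)
    (E0110 : α*((a0*d0 - a1*d1)*(b2*c2 - b3*c3)) + β*((a0*c2 - a1*c3)*(b2*d0 - b3*d1)) = -α)
    (E0111 : α*((a0*d2 - a1*d3)*(b2*c2 - b3*c3)) + β*((a0*c2 - a1*c3)*(b2*d2 - b3*d3)) = 0)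
    (E1000 : α*((a2*d0 - a3*d1)*(b0*c0 - b1*c1)) + β*((a2*c0 - a3*c1)*(b0*d0 - b1*d1)) = 0)
    (E1001 : α*((a2*d2 - a3*d3)*(b0*c0 - b1*c1)) + β*((a2*c0 - a3*c1)*(b0*d2 - b1*d3)) = -α)
    (E1010 : α*((a2*d0 - a3*d1)*(b0*c2 - b1*c3)) + β*((a2*c2 - a3*c3)*(b0*d0 - b1*d1)) = -β)
    (E1011 : α*((a2*d2 - a3*d3)*(b0*c2 - b1*c3)) + β*((a2*c2 - a3*c3)*(b0*d2 - b1*d3)) = 0)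
    (E1100 : α*((a2*d0 - a3*d1)*(b2*c0 - b3*c1)) + β*((a2*c0 - a3*c1)*(b2*d0 - b3*d1)) = 0)
    (E1101 : α*((a2*d2 - a3*d3)*(b2*c0 - b3*c1)) + β*((a2*c0 - a3*c1)*(b2*d2 - b3*d3)) = 0)
    (E1110 : α*((a2*d0 - a3*d1)*(b2*c2 - b3*c3)) + β*((a2*c2 - a3*c3)*(b2*d0 - b3*d1)) = 0)
    (E1111 : α*((a2*d2 - a3*d3)*(b2*c2 - b3*c3)) + β*((a2*c2 - a3*c3)*(b2*d2 - b3*d3)) = α + β) :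
    ∃ ε ε' : ℂ, (ε = 1 ∨ ε = -1) ∧ (ε' = 1 ∨ ε' = -1) ∧
      a0 = ε*d3 ∧ a1 = ε*d2 ∧ a2 = ε*d1 ∧ a3 = ε*d0 ∧
      b0 = ε'*d3 ∧ b1 = ε'*d2 ∧ b2 = ε'*d1 ∧ b3 = ε'*d0 ∧
      c0 = ε*ε'*d0 ∧ c1 = ε*ε'*d1 ∧ c2 = ε*ε'*d2 ∧ c3 = ε*ε'*d3 := by
  have dP : (a0*d0 - a1*d1)*(a2*d2 - a3*d3) - (a0*d2 - a1*d3)*(a2*d0 - a3*d1) = -1 := by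
    linear_combination (-(d0*d3 - d1*d2))*dA - dD
  have dQ : (b0*c0 - b1*c1)*(b2*c2 - b3*c3) - (b0*c2 - b1*c3)*(b2*c0 - b3*c1) = -1 := by
    linear_combination (-(c0*c3 - c1*c2))*dB - dC
  have dR : (b0*d0 - b1*d1)*(b2*d2 - b3*d3) - (b0*d2 - b1*d3)*(b2*d0 - b3*d1) = -1 := by
    linear_combination (-(d0*d3 - d1*d2))*dB - dD
  have dS : (a0*c0 - a1*c1)*(a2*c2 - a3*c3) - (a0*c2 - a1*c3)*(a2*c0 - a3*c1) = -1 := by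
    linear_combination (-(c0*c3 - c1*c2))*dA - dC
  obtain ⟨zP01, zQ01, zR01, zS01⟩ := corner_aux α β hα hβ hαβ
    (a0*d0 - a1*d1) (a0*d2 - a1*d3) (a2*d0 - a3*d1) (a2*d2 - a3*d3) (b0*c0 - b1*c1) (b0*c2 - b1*c3) (b2*c0 - b3*c1) (b2*c2 - b3*c3)
    (b0*d0 - b1*d1) (b0*d2 - b1*d3) (b2*d0 - b3*d1) (b2*d2 - b3*d3) (a0*c0 - a1*c1) (a0*c2 - a1*c3) (a2*c0 - a3*c1) (a2*c2 - a3*c3)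
    E0000 E0010 E0001 E0011 E0101 E0111 E1010 E1011 E0110 E1001 dP dQ dR dS
  obtain ⟨zP10, zQ10, zR10, zS10⟩ := corner_aux α β hα hβ hαβ
    (a2*d2 - a3*d3) (a2*d0 - a3*d1) (a0*d2 - a1*d3) (a0*d0 - a1*d1) (b2*c2 - b3*c3) (b2*c0 - b3*c1) (b0*c2 - b1*c3) (b0*c0 - b1*c1)
    (b2*d2 - b3*d3) (b2*d0 - b3*d1) (b0*d2 - b1*d3) (b0*d0 - b1*d1) (a2*c2 - a3*c3) (a2*c0 - a3*c1) (a0*c2 - a1*c3) (a0*c0 - a1*c1)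
    E1111 E1101 E1110 E1100 E1010 E1000 E0101 E0100 E1001 E0110
    (by linear_combination dP) (by linear_combination dQ)
    (by linear_combination dR) (by linear_combination dS)
  obtain ⟨ε, ε', hεor, hε'or, vP00, vP11, vQ00, vQ11, vR00, vR11, vS00, vS11⟩ :=
    diag_aux α β hα hβ hαβ
    (a0*d0 - a1*d1) (a0*d2 - a1*d3) (a2*d0 - a3*d1) (a2*d2 - a3*d3) (b0*c0 - b1*c1) (b0*c2 - b1*c3) (b2*c0 - b3*c1) (b2*c2 - b3*c3)
    (b0*d0 - b1*d1) (b0*d2 - b1*d3) (b2*d0 - b3*d1) (b2*d2 - b3*d3) (a0*c0 - a1*c1) (a0*c2 - a1*c3) (a2*c0 - a3*c1) (a2*c2 - a3*c3)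
    zP01 zP10 zQ01 zQ10 zR01 zR10 zS01 zS10
    E0000 E1111 E0110 E1001 E0101 E1010 dP dQ dR dS
  have ha0 : a0 = ε*d3 := by linear_combination d3*vP00 - d1*zP01 - a0*dD
  have ha1 : a1 = ε*d2 := by linear_combination d2*vP00 - d0*zP01 - a1*dD
  have ha2 : a2 = ε*d1 := by linear_combination d3*zP10 - d1*vP11 - a2*dD
  have ha3 : a3 = ε*d0 := by linear_combination d2*zP10 - d0*vP11 - a3*dD
  have hb0 : b0 = ε'*d3 := by linear_combination d3*vR00 - d1*zR01 - b0*dD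
  have hb1 : b1 = ε'*d2 := by linear_combination d2*vR00 - d0*zR01 - b1*dD
  have hb2 : b2 = ε'*d1 := by linear_combination d3*zR10 - d1*vR11 - b2*dD
  have hb3 : b3 = ε'*d0 := by linear_combination d2*zR10 - d0*vR11 - b3*dD
  have hc0 : c0 = ε*ε'*d0 := by
    have h : c0 = ε'*a3 := by linear_combination a3*vS00 - a1*zS10 - c0*dA
    rw [h, ha3]; ring
  have hc1 : c1 = ε*ε'*d1 := by
    have h : c1 = ε'*a2 := by linear_combination a2*vS00 - a0*zS10 - c1*dA
    rw [h, ha2]; ring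
  have hc2 : c2 = ε*ε'*d2 := by
    have h : c2 = ε'*a1 := by linear_combination a3*zS01 - a1*vS11 - c2*dA
    rw [h, ha1]; ring
  have hc3 : c3 = ε*ε'*d3 := by
    have h : c3 = ε'*a0 := by linear_combination a2*zS01 - a0*vS11 - c3*dA
    rw [h, ha0]; ring
  exact ⟨ε, ε', hεor, hε'or, ha0, ha1, ha2, ha3, hb0, hb1, hb2, hb3, hc0, hc1, hc2, hc3⟩


set_option maxHeartbeats 2000000 in
/-- The stabiliser of `s = λ₁(u₁ - u₂) + λ₂(u₁ - u₃)` in `SL(2,ℂ)⁴`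
equals `{(ε₁A^#, ε₂A^#, ε₃A, A) : A ∈ SL(2,ℂ), εᵢ = ±1, ε₁ε₂ε₃ = 1}`. -/
theorem stabiliser_semisimple_A2 (lam1 lam2 : ℂ)
    (h1 : lam1 ≠ 0) (h2 : lam2 ≠ 0) (h12 : lam1 ≠ -lam2) :
    {g : G4 | act g (lam1 • (u1 - u2) + lam2 • (u1 - u3)) =
        lam1 • (u1 - u2) + lam2 • (u1 - u3)} =
      {g : G4 | ∃ (A : SL2) (e1 e2 e3 : ℂ),
        (e1 = 1 ∨ e1 = -1) ∧ (e2 = 1 ∨ e2 = -1) ∧ (e3 = 1 ∨ e3 = -1) ∧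
        e1 * e2 * e3 = 1 ∧
        (g.1 : Matrix (Fin 2) (Fin 2) ℂ) = e1 • ((sharp A : SL2) : Matrix (Fin 2) (Fin 2) ℂ) ∧
        (g.2.1 : Matrix (Fin 2) (Fin 2) ℂ) = e2 • ((sharp A : SL2) : Matrix (Fin 2) (Fin 2) ℂ) ∧
        (g.2.2.1 : Matrix (Fin 2) (Fin 2) ℂ) = e3 • ((A : SL2) : Matrix (Fin 2) (Fin 2) ℂ) ∧
        g.2.2.2 = A} := by
  have hαβ : lam1 + lam2 ≠ 0 := fun h => h12 (eq_neg_of_add_eq_zero_left h)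
  ext g
  simp only [Set.mem_setOf_eq]
  constructor
  · intro hg
    have dA : (g.1 : Matrix (Fin 2) (Fin 2) ℂ) 0 0 * (g.1 : Matrix (Fin 2) (Fin 2) ℂ) 1 1
        - (g.1 : Matrix (Fin 2) (Fin 2) ℂ) 0 1 * (g.1 : Matrix (Fin 2) (Fin 2) ℂ) 1 0 = 1 := by
      rw [← Matrix.det_fin_two]; exact g.1.2
    have dB : (g.2.1 : Matrix (Fin 2) (Fin 2) ℂ) 0 0 * (g.2.1 : Matrix (Fin 2) (Fin 2) ℂ) 1 1
        - (g.2.1 : Matrix (Fin 2) (Fin 2) ℂ) 0 1 * (g.2.1 : Matrix (Fin 2) (Fin 2) ℂ) 1 0 = 1 := by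
      rw [← Matrix.det_fin_two]; exact g.2.1.2
    have dC : (g.2.2.1 : Matrix (Fin 2) (Fin 2) ℂ) 0 0 * (g.2.2.1 : Matrix (Fin 2) (Fin 2) ℂ) 1 1
        - (g.2.2.1 : Matrix (Fin 2) (Fin 2) ℂ) 0 1 * (g.2.2.1 : Matrix (Fin 2) (Fin 2) ℂ) 1 0 = 1 := by
      rw [← Matrix.det_fin_two]; exact g.2.2.1.2
    have dD : (g.2.2.2 : Matrix (Fin 2) (Fin 2) ℂ) 0 0 * (g.2.2.2 : Matrix (Fin 2) (Fin 2) ℂ) 1 1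
        - (g.2.2.2 : Matrix (Fin 2) (Fin 2) ℂ) 0 1 * (g.2.2.2 : Matrix (Fin 2) (Fin 2) ℂ) 1 0 = 1 := by
      rw [← Matrix.det_fin_two]; exact g.2.2.2.2
    have h0000 := congrFun (congrFun (congrFun (congrFun hg 0) 0) 0) 0
    have h0001 := congrFun (congrFun (congrFun (congrFun hg 0) 0) 0) 1
    have h0010 := congrFun (congrFun (congrFun (congrFun hg 0) 0) 1) 0
    have h0011 := congrFun (congrFun (congrFun (congrFun hg 0) 0) 1) 1
    have h0100 := congrFun (congrFun (congrFun (congrFun hg 0) 1) 0) 0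
    have h0101 := congrFun (congrFun (congrFun (congrFun hg 0) 1) 0) 1
    have h0110 := congrFun (congrFun (congrFun (congrFun hg 0) 1) 1) 0
    have h0111 := congrFun (congrFun (congrFun (congrFun hg 0) 1) 1) 1
    have h1000 := congrFun (congrFun (congrFun (congrFun hg 1) 0) 0) 0
    have h1001 := congrFun (congrFun (congrFun (congrFun hg 1) 0) 0) 1
    have h1010 := congrFun (congrFun (congrFun (congrFun hg 1) 0) 1) 0
    have h1011 := congrFun (congrFun (congrFun (congrFun hg 1) 0) 1) 1
    have h1100 := congrFun (congrFun (congrFun (congrFun hg 1) 1) 0) 0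
    have h1101 := congrFun (congrFun (congrFun (congrFun hg 1) 1) 0) 1
    have h1110 := congrFun (congrFun (congrFun (congrFun hg 1) 1) 1) 0
    have h1111 := congrFun (congrFun (congrFun (congrFun hg 1) 1) 1) 1
    simp [act, u1, u2, u3, e, Fin.sum_univ_two] at h0000
    simp [act, u1, u2, u3, e, Fin.sum_univ_two] at h0001
    simp [act, u1, u2, u3, e, Fin.sum_univ_two] at h0010
    simp [act, u1, u2, u3, e, Fin.sum_univ_two] at h0011
    simp [act, u1, u2, u3, e, Fin.sum_univ_two] at h0100
    simp [act, u1, u2, u3, e, Fin.sum_univ_two] at h0101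
    simp [act, u1, u2, u3, e, Fin.sum_univ_two] at h0110
    simp [act, u1, u2, u3, e, Fin.sum_univ_two] at h0111
    simp [act, u1, u2, u3, e, Fin.sum_univ_two] at h1000
    simp [act, u1, u2, u3, e, Fin.sum_univ_two] at h1001
    simp [act, u1, u2, u3, e, Fin.sum_univ_two] at h1010
    simp [act, u1, u2, u3, e, Fin.sum_univ_two] at h1011
    simp [act, u1, u2, u3, e, Fin.sum_univ_two] at h1100
    simp [act, u1, u2, u3, e, Fin.sum_univ_two] at h1101
    simp [act, u1, u2, u3, e, Fin.sum_univ_two] at h1110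
    simp [act, u1, u2, u3, e, Fin.sum_univ_two] at h1111
    obtain ⟨ε, ε', hεor, hε'or, ha0, ha1, ha2, ha3, hb0, hb1, hb2, hb3, hc0, hc1, hc2, hc3⟩ :=
      master lam1 lam2 h1 h2 hαβ
      ((g.1 : Matrix (Fin 2) (Fin 2) ℂ) 0 0) ((g.1 : Matrix (Fin 2) (Fin 2) ℂ) 0 1)
      ((g.1 : Matrix (Fin 2) (Fin 2) ℂ) 1 0) ((g.1 : Matrix (Fin 2) (Fin 2) ℂ) 1 1)
      ((g.2.1 : Matrix (Fin 2) (Fin 2) ℂ) 0 0) ((g.2.1 : Matrix (Fin 2) (Fin 2) ℂ) 0 1)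
      ((g.2.1 : Matrix (Fin 2) (Fin 2) ℂ) 1 0) ((g.2.1 : Matrix (Fin 2) (Fin 2) ℂ) 1 1)
      ((g.2.2.1 : Matrix (Fin 2) (Fin 2) ℂ) 0 0) ((g.2.2.1 : Matrix (Fin 2) (Fin 2) ℂ) 0 1)
      ((g.2.2.1 : Matrix (Fin 2) (Fin 2) ℂ) 1 0) ((g.2.2.1 : Matrix (Fin 2) (Fin 2) ℂ) 1 1)
      ((g.2.2.2 : Matrix (Fin 2) (Fin 2) ℂ) 0 0) ((g.2.2.2 : Matrix (Fin 2) (Fin 2) ℂ) 0 1)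
      ((g.2.2.2 : Matrix (Fin 2) (Fin 2) ℂ) 1 0) ((g.2.2.2 : Matrix (Fin 2) (Fin 2) ℂ) 1 1)
      dA dB dC dD
      (by linear_combination h0000)
      (by linear_combination h0001)
      (by linear_combination h0010)
      (by linear_combination h0011)
      (by linear_combination h0100)
      (by linear_combination h0101)
      (by linear_combination h0110)
      (by linear_combination h0111)
      (by linear_combination h1000)
      (by linear_combination h1001)
      (by linear_combination h1010)
      (by linear_combination h1011)
      (by linear_combination h1100)
      (by linear_combination h1101)
      (by linear_combination h1110)
      (by linear_combination h1111)
    refine ⟨g.2.2.2, ε, ε', ε*ε', hεor, hε'or, ?_, ?_, ?_, ?_, ?_, rfl⟩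
    · rcases hεor with h | h <;> rcases hε'or with h' | h' <;> rw [h, h'] <;> norm_num
    · rcases hεor with h | h <;> rcases hε'or with h' | h' <;> rw [h, h'] <;> norm_num
    · ext i j
      fin_cases i <;> fin_cases j <;>
        simp only [sharp, Matrix.smul_apply, smul_eq_mul, Matrix.cons_val', Matrix.cons_val_zero,
          Matrix.cons_val_one, Matrix.head_cons, Matrix.empty_val', Matrix.cons_val_fin_one,
          Matrix.head_fin_const, Fin.isValue]
      · exact ha0
      · exact ha1
      · exact ha2
      · exact ha3
    · ext i j
      fin_cases i <;> fin_cases j <;>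
        simp only [sharp, Matrix.smul_apply, smul_eq_mul, Matrix.cons_val', Matrix.cons_val_zero,
          Matrix.cons_val_one, Matrix.head_cons, Matrix.empty_val', Matrix.cons_val_fin_one,
          Matrix.head_fin_const, Fin.isValue]
      · exact hb0
      · exact hb1
      · exact hb2
      · exact hb3
    · ext i j
      fin_cases i <;> fin_cases j <;>
        simp only [Matrix.smul_apply, smul_eq_mul, Fin.isValue]
      · exact hc0
      · exact hc1
      · exact hc2
      · exact hc3
  · rintro ⟨A, e1, e2, e3, he1, he2, he3, hprod, hg1, hg2, hg3, hg4⟩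
    have hd : (A : Matrix (Fin 2) (Fin 2) ℂ) 0 0 * (A : Matrix (Fin 2) (Fin 2) ℂ) 1 1
        - (A : Matrix (Fin 2) (Fin 2) ℂ) 0 1 * (A : Matrix (Fin 2) (Fin 2) ℂ) 1 0 = 1 := by
      rw [← Matrix.det_fin_two]; exact A.2
    have hkey : e1*e2*e3*((A : Matrix (Fin 2) (Fin 2) ℂ) 0 0 * (A : Matrix (Fin 2) (Fin 2) ℂ) 1 1
        - (A : Matrix (Fin 2) (Fin 2) ℂ) 0 1 * (A : Matrix (Fin 2) (Fin 2) ℂ) 1 0)^2 = 1 := by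
      linear_combination e1*e2*e3*(((A : Matrix (Fin 2) (Fin 2) ℂ) 0 0 *
        (A : Matrix (Fin 2) (Fin 2) ℂ) 1 1 - (A : Matrix (Fin 2) (Fin 2) ℂ) 0 1 *
        (A : Matrix (Fin 2) (Fin 2) ℂ) 1 0) + 1)*hd + hprod
    have ga00 : (g.1 : Matrix (Fin 2) (Fin 2) ℂ) 0 0 = e1 * (A : Matrix (Fin 2) (Fin 2) ℂ) 1 1 := by
      rw [hg1]; rfl
    have ga01 : (g.1 : Matrix (Fin 2) (Fin 2) ℂ) 0 1 = e1 * (A : Matrix (Fin 2) (Fin 2) ℂ) 1 0 := by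
      rw [hg1]; rfl
    have ga10 : (g.1 : Matrix (Fin 2) (Fin 2) ℂ) 1 0 = e1 * (A : Matrix (Fin 2) (Fin 2) ℂ) 0 1 := by
      rw [hg1]; rfl
    have ga11 : (g.1 : Matrix (Fin 2) (Fin 2) ℂ) 1 1 = e1 * (A : Matrix (Fin 2) (Fin 2) ℂ) 0 0 := by
      rw [hg1]; rfl
    have gb00 : (g.2.1 : Matrix (Fin 2) (Fin 2) ℂ) 0 0 = e2 * (A : Matrix (Fin 2) (Fin 2) ℂ) 1 1 := by
      rw [hg2]; rfl
    have gb01 : (g.2.1 : Matrix (Fin 2) (Fin 2) ℂ) 0 1 = e2 * (A : Matrix (Fin 2) (Fin 2) ℂ) 1 0 := by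
      rw [hg2]; rfl
    have gb10 : (g.2.1 : Matrix (Fin 2) (Fin 2) ℂ) 1 0 = e2 * (A : Matrix (Fin 2) (Fin 2) ℂ) 0 1 := by
      rw [hg2]; rfl
    have gb11 : (g.2.1 : Matrix (Fin 2) (Fin 2) ℂ) 1 1 = e2 * (A : Matrix (Fin 2) (Fin 2) ℂ) 0 0 := by
      rw [hg2]; rfl
    have gc00 : (g.2.2.1 : Matrix (Fin 2) (Fin 2) ℂ) 0 0 = e3 * (A : Matrix (Fin 2) (Fin 2) ℂ) 0 0 := by
      rw [hg3]; rfl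
    have gc01 : (g.2.2.1 : Matrix (Fin 2) (Fin 2) ℂ) 0 1 = e3 * (A : Matrix (Fin 2) (Fin 2) ℂ) 0 1 := by
      rw [hg3]; rfl
    have gc10 : (g.2.2.1 : Matrix (Fin 2) (Fin 2) ℂ) 1 0 = e3 * (A : Matrix (Fin 2) (Fin 2) ℂ) 1 0 := by
      rw [hg3]; rfl
    have gc11 : (g.2.2.1 : Matrix (Fin 2) (Fin 2) ℂ) 1 1 = e3 * (A : Matrix (Fin 2) (Fin 2) ℂ) 1 1 := by
      rw [hg3]; rfl
    funext i1 i2 i3 i4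
    fin_cases i1 <;> fin_cases i2 <;> fin_cases i3 <;> fin_cases i4 <;>
      simp [act, u1, u2, u3, e, Fin.sum_univ_two, hg4, ga00, ga01, ga10, ga11, gb00, gb01, gb10, gb11, gc00, gc01, gc10, gc11] <;>
      first
        | linear_combination (lam1+lam2)*hkey
        | linear_combination (-lam1)*hkey
        | linear_combination (-lam2)*hkey
        | ring
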